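/- Let S = K_1 ∪ K_2 be the vertex disjoint union of two cliques of weights a_1 and a_2 and orders a_1 + t_1 and a_2 + t_2 respectively, with a_1 = p_1·2^{r_1}, a_2 = p_2·2^{r_2}, t_1, t_2, r_1, r_2 ≥ 0, r_1 < r_2, and p_1, p_2 odd, and let d = gcd(p_1, p_2). For a 2-coloring c of ℤ, there is no monochromatic translate of either of the sets {0, |a_1 − a_2|} and {0, a_1 + a_2} if and only if c(x) ≠ c(y) for all integers x, y with |x − y| = d·2^{r_1}. -/

import Mathlib

open Fin.CommRing

private lemma fin2_cast_odd {k : ℤ} (h : Odd k) : (k : Fin 2) = 1 := by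
  obtain ⟨l, rfl⟩ := h
  push_cast
  generalize (l : Fin 2) = x
  revert x
  decide

private lemma fin2_ne_iff : ∀ x y : Fin 2, x ≠ y ↔ y = x + 1 := by decide

private lemma fin2_solve : ∀ A B K : Fin 2, B + -K = A + 1 → A = B + (-K - 1) := by decide

private lemma fin2_add_one_ne : ∀ x : Fin 2, x + 1 ≠ x := by decide

private lemma step_lemma (c : ℤ → Fin 2) (m : ℤ) (h : ∀ j, c (j + m) = c j + 1) :
    ∀ (k : ℤ) (j : ℤ), c (j + k * m) = c j + (k : Fin 2) := by
  intro k
  induction k using Int.induction_on with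
  | zero => intro j; simp
  | succ k ih =>
    intro j
    have h1 : j + (k + 1 : ℤ) * m = (j + (k:ℤ) * m) + m := by ring
    rw [h1, h, ih]
    push_cast
    ring
  | pred k ih =>
    intro j
    have h2 : j + (-(k:ℤ) - 1) * m + m = j + (-(k:ℤ)) * m := by ring
    have h3 := h (j + (-(k:ℤ) - 1) * m)
    rw [h2, ih] at h3
    push_cast at h3 ⊢
    exact fin2_solve _ _ _ h3

/-- Lemma 9(c) (2cliquesa:lem(c)): let `S = K_1 ∪ K_2` be the vertex disjoint union of
two cliques of weights `a1, a2` and orders `a1 + t1, a2 + t2`, with `a1 = p1·2^r1`,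
`a2 = p2·2^r2`, `p1, p2` odd and `r1 < r2`, and let `g = gcd(p1, p2)`. A `2`-coloring
`c` of `ℤ` has no monochromatic translate of either of the sets `{0, |a1 - a2|}` and
`{0, a1 + a2}` iff `c x ≠ c y` whenever `|x - y| = g·2^r1`. -/
theorem two_cliques_coloring_characterization (d a1 a2 t1 t2 p1 p2 r1 r2 : ℕ)
    (ha1 : a1 = p1 * 2 ^ r1) (ha2 : a2 = p2 * 2 ^ r2)
    (hp1 : Odd p1) (hp2 : Odd p2) (hr : r1 < r2)
    (K1 K2 : Finset (Fin d)) (hK1 : K1.card = a1 + t1) (hK2 : K2.card = a2 + t2)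
    (hdisj : Disjoint K1 K2)
    (c : ℤ → Fin 2) :
    ((¬ ∃ j : ℤ, c j = c (j + |(a1 : ℤ) - (a2 : ℤ)|)) ∧
      (¬ ∃ j : ℤ, c j = c (j + ((a1 : ℤ) + (a2 : ℤ))))) ↔
    (∀ x y : ℤ, |x - y| = (Nat.gcd p1 p2 : ℤ) * 2 ^ r1 → c x ≠ c y) := by
  set G : ℕ := Nat.gcd p1 p2 with hGdef
  have hG0 : 0 < G := Nat.gcd_pos_of_pos_left p2 hp1.pos
  set P1 : ℕ := p1 / G with hP1def
  set P2 : ℕ := p2 / G with hP2def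
  have hP1 : p1 = P1 * G := (Nat.div_mul_cancel (Nat.gcd_dvd_left p1 p2)).symm
  have hP2 : p2 = P2 * G := (Nat.div_mul_cancel (Nat.gcd_dvd_right p1 p2)).symm
  have hcop : Nat.Coprime P1 P2 := Nat.coprime_div_gcd_div_gcd hG0
  have hP1odd : Odd P1 := (Nat.odd_mul.mp (hP1 ▸ hp1)).1
  have hP2odd : Odd P2 := (Nat.odd_mul.mp (hP2 ▸ hp2)).1
  set s : ℕ := r2 - r1 with hsdef
  have hs : 1 ≤ s := by omega
  have hr2 : r2 = r1 + s := by omega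
  set g : ℤ := (G : ℤ) * 2 ^ r1 with hgdef
  have hg0 : 0 < g := by positivity
  set u : ℤ := (P1 : ℤ) - (P2 : ℤ) * 2 ^ s with hudef
  set v : ℤ := (P1 : ℤ) + (P2 : ℤ) * 2 ^ s with hvdef
  have hp1Z : (p1 : ℤ) = (P1 : ℤ) * G := by exact_mod_cast hP1
  have hp2Z : (p2 : ℤ) = (P2 : ℤ) * G := by exact_mod_cast hP2
  have hA1 : (a1 : ℤ) = (P1 : ℤ) * G * 2 ^ r1 := by
    rw [ha1]; push_cast; rw [hp1Z]
  have hA2 : (a2 : ℤ) = (P2 : ℤ) * G * (2 ^ r1 * 2 ^ s) := by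
    rw [ha2, hr2]; push_cast; rw [hp2Z, pow_add]
  have heq1 : (a1 : ℤ) - (a2 : ℤ) = g * u := by
    rw [hA1, hA2, hgdef, hudef]; ring
  have heq2 : (a1 : ℤ) + (a2 : ℤ) = g * v := by
    rw [hA1, hA2, hgdef, hvdef]; ring
  have hP1oddZ : Odd ((P1 : ℕ) : ℤ) := by exact_mod_cast hP1odd
  have hP2oddZ : Odd ((P2 : ℕ) : ℤ) := by exact_mod_cast hP2odd
  have h2s : Even ((2 : ℤ) ^ s) := by
    rw [show s = (s - 1) + 1 by omega, pow_succ]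
    exact even_two.mul_left _
  have heven : Even ((P2 : ℤ) * 2 ^ s) := h2s.mul_left _
  have hu_odd : Odd u := by
    rw [hudef, Int.odd_sub]
    exact iff_of_true hP1oddZ heven
  have hv_odd : Odd v := by
    rw [hvdef, Int.odd_add]
    exact iff_of_true hP1oddZ heven
  -- gcd u v = 1
  have hgcduv : Int.gcd u v = 1 := by
    set e : ℕ := Int.gcd u v with hedef
    have hdu : (e : ℤ) ∣ u := Int.gcd_dvd_left u v
    have hdv : (e : ℤ) ∣ v := Int.gcd_dvd_right u v
    have h2P1 : (e : ℤ) ∣ 2 * (P1 : ℤ) := by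
      have := dvd_add hdu hdv
      rwa [show u + v = 2 * (P1 : ℤ) by rw [hudef, hvdef]; ring] at this
    have h2P2 : (e : ℤ) ∣ 2 * ((P2 : ℤ) * 2 ^ s) := by
      have := dvd_sub hdv hdu
      rwa [show v - u = 2 * ((P2 : ℤ) * 2 ^ s) by rw [hudef, hvdef]; ring] at this
    have he_odd : Odd e := by
      rw [← Nat.not_even_iff_odd]
      intro hev
      have h2e : (2 : ℤ) ∣ (e : ℤ) := by exact_mod_cast hev.two_dvd
      obtain ⟨w, hw⟩ := h2e.trans hdv
      exact (Int.not_even_iff_odd.mpr hv_odd) ⟨w, by omega⟩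
    have heP1 : e ∣ 2 * P1 := by exact_mod_cast h2P1
    have heP2 : e ∣ 2 ^ (s + 1) * P2 := by
      have : (e : ℤ) ∣ 2 ^ (s + 1) * (P2 : ℤ) := by
        rw [show (2 : ℤ) ^ (s + 1) * (P2 : ℤ) = 2 * ((P2 : ℤ) * 2 ^ s) by ring]
        exact h2P2
      exact_mod_cast this
    have hcop2 : Nat.Coprime e 2 := Nat.coprime_two_right.mpr he_odd
    have heP1' : e ∣ P1 := hcop2.dvd_of_dvd_mul_left heP1
    have heP2' : e ∣ P2 := (Nat.Coprime.pow_right _ hcop2).dvd_of_dvd_mul_left heP2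
    have : e ∣ 1 := hcop ▸ Nat.dvd_gcd heP1' heP2'
    exact Nat.dvd_one.mp this
  set u' : ℤ := |u| with hu'def
  have hu'_odd : Odd u' := by
    rcases abs_choice u with h | h <;> rw [hu'def, h]
    · exact hu_odd
    · exact hu_odd.neg
  have hgcd' : Int.gcd u' v = 1 := by
    rw [hu'def, show Int.gcd |u| v = Int.gcd u v from by
      unfold Int.gcd; rw [Int.natAbs_abs]]
    exact hgcduv
  set α : ℤ := Int.gcdA u' v with hαdef
  set β : ℤ := Int.gcdB u' v with hβdef
  have hbez : (1 : ℤ) = u' * α + v * β := by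
    have := Int.gcd_eq_gcd_ab u' v
    rw [hgcd'] at this
    exact_mod_cast this
  have habs1 : |(a1 : ℤ) - (a2 : ℤ)| = g * u' := by
    rw [heq1, abs_mul, abs_of_pos hg0, hu'def]
  constructor
  · rintro ⟨h1, h2⟩
    push_neg at h1 h2
    have hm1 : ∀ j, c (j + u' * g) = c j + 1 := by
      intro j
      have := (fin2_ne_iff _ _).mp (h1 j)
      rwa [habs1, mul_comm] at this
    have hm2 : ∀ j, c (j + v * g) = c j + 1 := by
      intro j
      have := (fin2_ne_iff _ _).mp (h2 j)
      rwa [heq2, mul_comm] at this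
    have hAg : ∀ j, c (j + g) = c j + 1 := by
      intro j
      have e1 : j + g = (j + α * (u' * g)) + β * (v * g) := by
        have : g = g * (u' * α + v * β) := by rw [← hbez]; ring
        linarith [this]
      rw [e1, step_lemma c (v * g) hm2, step_lemma c (u' * g) hm1]
      have hcast : ((1 : ℤ) : Fin 2) = ((α : ℤ) : Fin 2) + ((β : ℤ) : Fin 2) := by
        have := congrArg (fun z : ℤ => (z : Fin 2)) hbez
        push_cast at this
        rwa [fin2_cast_odd hu'_odd, fin2_cast_odd hv_odd, one_mul, one_mul] at this
      push_cast at hcast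
      rw [add_assoc, ← hcast]
    intro x y hxy hcxy
    rcases (abs_eq hg0.le).mp hxy with h | h
    · have : x = y + g := by linarith
      rw [this, hAg] at hcxy
      exact fin2_add_one_ne _ hcxy
    · have : y = x + g := by linarith
      rw [this, hAg] at hcxy
      exact fin2_add_one_ne _ hcxy.symm
  · intro h
    have hAg : ∀ j, c (j + g) = c j + 1 := by
      intro j
      refine (fin2_ne_iff _ _).mp (h j (j + g) ?_)
      rw [show j - (j + g) = -g by ring, abs_neg, abs_of_pos hg0]
    constructor
    · rintro ⟨j, hj⟩
      rw [habs1, mul_comm, step_lemma c g hAg u' j, fin2_cast_odd hu'_odd] at hj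
      exact fin2_add_one_ne _ hj.symm
    · rintro ⟨j, hj⟩
      rw [heq2, mul_comm, step_lemma c g hAg v j, fin2_cast_odd hv_odd] at hj
      exact fin2_add_one_ne _ hj.symm
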